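/- Let q > max(s₁, s₂) with q, s₁, s₂ ≥ 1, and define w(x,y) = (q²(x+y) − 2qxy)/(q² − xy) and f(x,y) = (q²x − qxy)/(q²(x+y) − 2qxy). Then for any finite matrix (a_{ij})_{(i,j) ∈ A×B} with nonnegative entries, (∑_{(i,j)} a_{ij}^{w(s₁,s₂)})^{1/w(s₁,s₂)} ≤ (∑_{i∈A} (∑_{j∈B} a_{ij}^q)^{s₁/q})^{f(s₁,s₂)/s₁} · (∑_{j∈B} (∑_{i∈A} a_{ij}^q)^{s₂/q})^{f(s₂,s₁)/s₂}. -/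

import Mathlib

-- generalized Minkowski
lemma Lp_sum_le' {ι κ : Type*} [Fintype ι] (s : Finset κ) (b : ι → κ → ℝ)
    (hb : ∀ i j, 0 ≤ b i j) {p : ℝ} (hp : 1 ≤ p) :
    (∑ i, (∑ j ∈ s, b i j) ^ p) ^ (1/p) ≤ ∑ j ∈ s, (∑ i, (b i j) ^ p) ^ (1/p) := by
  have hp0 : (0:ℝ) < p := lt_of_lt_of_le one_pos hp
  classical
  induction s using Finset.induction with
  | empty =>
      simp [Real.zero_rpow (ne_of_gt hp0), Real.zero_rpow (by positivity : (1:ℝ)/p ≠ 0), Real.zero_rpow (by positivity : p⁻¹ ≠ 0)]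
  | @insert k s hk ih =>
      simp only [Finset.sum_insert hk]
      have H := Real.Lp_add_le Finset.univ (fun i => b i k) (fun i => ∑ j ∈ s, b i j) hp
      have h1 : ∀ i : ι, |b i k + ∑ j ∈ s, b i j| ^ p = (b i k + ∑ j ∈ s, b i j) ^ p := by
        intro i; rw [abs_of_nonneg (add_nonneg (hb i k) (Finset.sum_nonneg fun j _ => hb i j))]
      have h2 : ∀ i : ι, |b i k| ^ p = (b i k) ^ p := by
        intro i; rw [abs_of_nonneg (hb i k)]
      have h3 : ∀ i : ι, |∑ j ∈ s, b i j| ^ p = (∑ j ∈ s, b i j) ^ p := by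
        intro i; rw [abs_of_nonneg (Finset.sum_nonneg fun j _ => hb i j)]
      simp only [h1, h2, h3] at H
      calc (∑ i, (b i k + ∑ j ∈ s, b i j) ^ p) ^ (1/p)
          ≤ (∑ i, (b i k) ^ p) ^ (1/p) + (∑ i, (∑ j ∈ s, b i j) ^ p) ^ (1/p) := by
            simpa using H
        _ ≤ (∑ i, (b i k) ^ p) ^ (1/p) + ∑ j ∈ s, (∑ i, (b i j) ^ p) ^ (1/p) := by
            exact add_le_add_right ih _

theorem defant_popa_schwarting {A B : Type*} [Fintype A] [Fintype B]
    [Nonempty A] [Nonempty B]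
    (q s₁ s₂ : ℝ) (hs₁ : 1 ≤ s₁) (hs₂ : 1 ≤ s₂) (hq : max s₁ s₂ < q)
    (a : A → B → ℝ) (ha : ∀ i j, 0 ≤ a i j) :
    (∑ i : A, ∑ j : B,
        a i j ^ ((q ^ 2 * (s₁ + s₂) - 2 * q * s₁ * s₂) / (q ^ 2 - s₁ * s₂))) ^
        (1 / ((q ^ 2 * (s₁ + s₂) - 2 * q * s₁ * s₂) / (q ^ 2 - s₁ * s₂))) ≤
      (∑ i : A, (∑ j : B, a i j ^ q) ^ (s₁ / q)) ^
          (((q ^ 2 * s₁ - q * s₁ * s₂) / (q ^ 2 * (s₁ + s₂) - 2 * q * s₁ * s₂)) / s₁) *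
        (∑ j : B, (∑ i : A, a i j ^ q) ^ (s₂ / q)) ^
          (((q ^ 2 * s₂ - q * s₂ * s₁) / (q ^ 2 * (s₂ + s₁) - 2 * q * s₂ * s₁)) / s₂) := by
  obtain ⟨hq1, hq2⟩ := max_lt_iff.mp hq
  have h0s₁ : (0:ℝ) < s₁ := lt_of_lt_of_le one_pos hs₁
  have h0s₂ : (0:ℝ) < s₂ := lt_of_lt_of_le one_pos hs₂
  have h0q : (0:ℝ) < q := lt_trans h0s₁ hq1
  have hD : (0:ℝ) < q ^ 2 - s₁ * s₂ := by nlinarith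
  have hN : (0:ℝ) < q ^ 2 * (s₁ + s₂) - 2 * q * s₁ * s₂ := by
    nlinarith [mul_pos (mul_pos h0q h0s₁) (sub_pos.mpr hq2),
      mul_pos (mul_pos h0q h0s₂) (sub_pos.mpr hq1)]
  rw [show q ^ 2 * (s₂ + s₁) - 2 * q * s₂ * s₁ = q ^ 2 * (s₁ + s₂) - 2 * q * s₁ * s₂ from by ring]
  set D := q ^ 2 - s₁ * s₂ with hDdef
  set N := q ^ 2 * (s₁ + s₂) - 2 * q * s₁ * s₂ with hNdef
  set W := N / D with hWdef
  have hW : 0 < W := div_pos hN hD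
  set c₁ := q * s₁ * (q - s₂) / D with hc₁def
  set c₂ := q * s₂ * (q - s₁) / D with hc₂def
  have hc₁ : 0 < c₁ := div_pos (mul_pos (mul_pos h0q h0s₁) (sub_pos.mpr hq2)) hD
  have hc₂ : 0 < c₂ := div_pos (mul_pos (mul_pos h0q h0s₂) (sub_pos.mpr hq1)) hD
  have hWsum : W = c₁ + c₂ := by
    rw [hWdef, hc₁def, hc₂def, hNdef, ← add_div]; congr 1; ring
  have hc₁q : c₁ < q := by
    rw [hc₁def, div_lt_iff₀ hD]
    nlinarith [mul_pos (mul_pos h0q h0q) (sub_pos.mpr hq1)]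
  have hc₁s : c₁ < s₁ := by
    rw [hc₁def, div_lt_iff₀ hD]
    nlinarith [mul_pos (mul_pos h0s₁ h0s₂) (sub_pos.mpr hq1)]
  have hDne : D ≠ 0 := ne_of_gt hD
  -- conjugate exponents
  have hconj1 : (q / c₁).HolderConjugate (s₂ / c₂) := by
    rw [Real.holderConjugate_iff]; constructor
    · rw [lt_div_iff₀ hc₁, one_mul]; exact hc₁q
    · rw [inv_div, inv_div, hc₁def, hc₂def]
      field_simp
      ring
  have hconj2 : (s₁ / c₁).HolderConjugate (q / c₂) := by
    rw [Real.holderConjugate_iff]; constructor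
    · rw [lt_div_iff₀ hc₁, one_mul]; exact hc₁s
    · rw [inv_div, inv_div, hc₁def, hc₂def]
      field_simp
      ring
  have hsum_q_nn : ∀ i : A, (0:ℝ) ≤ ∑ j : B, a i j ^ q :=
    fun i => Finset.sum_nonneg fun j _ => Real.rpow_nonneg (ha i j) q
  have hsum_s_nn : ∀ i : A, (0:ℝ) ≤ ∑ j : B, a i j ^ s₂ :=
    fun i => Finset.sum_nonneg fun j _ => Real.rpow_nonneg (ha i j) s₂
  -- Step B : Hölder in j
  have stepB : ∀ i : A, (∑ j : B, a i j ^ c₁ * a i j ^ c₂) ≤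
      (∑ j : B, a i j ^ q) ^ (c₁ / q) * (∑ j : B, a i j ^ s₂) ^ (c₂ / s₂) := by
    intro i
    have H := Real.inner_le_Lp_mul_Lq_of_nonneg (s := Finset.univ) hconj1
      (f := fun j => a i j ^ c₁) (g := fun j => a i j ^ c₂)
      (fun j _ => Real.rpow_nonneg (ha i j) _) (fun j _ => Real.rpow_nonneg (ha i j) _)
    have e1 : ∀ j : B, (a i j ^ c₁) ^ (q / c₁) = a i j ^ q := fun j => by
      rw [← Real.rpow_mul (ha i j), show c₁ * (q / c₁) = q from by field_simp]
    have e2 : ∀ j : B, (a i j ^ c₂) ^ (s₂ / c₂) = a i j ^ s₂ := fun j => by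
      rw [← Real.rpow_mul (ha i j), show c₂ * (s₂ / c₂) = s₂ from by field_simp]
    simpa only [e1, e2, one_div_div] using H
  -- Step C : Hölder in i
  set U : A → ℝ := fun i => (∑ j : B, a i j ^ q) ^ (c₁ / q) with hU
  set V : A → ℝ := fun i => (∑ j : B, a i j ^ s₂) ^ (c₂ / s₂) with hV
  set X1 := ∑ i : A, (∑ j : B, a i j ^ q) ^ (s₁ / q) with hX1
  set M := ∑ i : A, (∑ j : B, a i j ^ s₂) ^ (q / s₂) with hM
  set T := ∑ j : B, (∑ i : A, a i j ^ q) ^ (s₂ / q) with hT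
  have hX1nn : 0 ≤ X1 := Finset.sum_nonneg fun i _ => Real.rpow_nonneg (hsum_q_nn i) _
  have hMnn : 0 ≤ M := Finset.sum_nonneg fun i _ => Real.rpow_nonneg (hsum_s_nn i) _
  have hTnn : 0 ≤ T :=
    Finset.sum_nonneg fun j _ => Real.rpow_nonneg
      (Finset.sum_nonneg fun i _ => Real.rpow_nonneg (ha i j) q) _
  have stepC : (∑ i : A, U i * V i) ≤ X1 ^ (c₁ / s₁) * M ^ (c₂ / q) := by
    have H := Real.inner_le_Lp_mul_Lq_of_nonneg (s := Finset.univ) hconj2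
      (f := U) (g := V)
      (fun i _ => Real.rpow_nonneg (hsum_q_nn i) _)
      (fun i _ => Real.rpow_nonneg (hsum_s_nn i) _)
    have e1 : ∀ i : A, U i ^ (s₁ / c₁) = (∑ j : B, a i j ^ q) ^ (s₁ / q) := fun i => by
      rw [hU, ← Real.rpow_mul (hsum_q_nn i),
        show c₁ / q * (s₁ / c₁) = s₁ / q from by field_simp]
    have e2 : ∀ i : A, V i ^ (q / c₂) = (∑ j : B, a i j ^ s₂) ^ (q / s₂) := fun i => by
      rw [hV, ← Real.rpow_mul (hsum_s_nn i),
        show c₂ / s₂ * (q / c₂) = q / s₂ from by field_simp]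
    simpa only [e1, e2, one_div_div, ← hX1, ← hM] using H
  -- Step D : Minkowski
  have stepD : M ^ (c₂ / q) ≤ T ^ (c₂ / s₂) := by
    have hqs : (1:ℝ) ≤ q / s₂ := (one_le_div h0s₂).mpr hq2.le
    have mink := Lp_sum_le' (ι := A) Finset.univ (fun i j => a i j ^ s₂)
      (fun i j => Real.rpow_nonneg (ha i j) s₂) hqs
    have e3 : ∀ (i : A) (j : B), (a i j ^ s₂) ^ (q / s₂) = a i j ^ q := fun i j => by
      rw [← Real.rpow_mul (ha i j), show s₂ * (q / s₂) = q from by field_simp]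
    rw [one_div_div] at mink
    simp only [e3, ← hM, ← hT] at mink
    have : M ^ (c₂ / q) = (M ^ (s₂ / q)) ^ (c₂ / s₂) := by
      rw [← Real.rpow_mul hMnn, show s₂ / q * (c₂ / s₂) = c₂ / q from by field_simp]
    rw [this]
    exact Real.rpow_le_rpow (Real.rpow_nonneg hMnn _) mink (by positivity)
  -- combine
  have key : (∑ i : A, ∑ j : B, a i j ^ W) ≤ X1 ^ (c₁ / s₁) * T ^ (c₂ / s₂) := by
    have expand : ∀ (i : A) (j : B), a i j ^ (c₁ + c₂) = a i j ^ c₁ * a i j ^ c₂ :=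
      fun i j => Real.rpow_add' (ha i j) (ne_of_gt (add_pos hc₁ hc₂))
    calc (∑ i : A, ∑ j : B, a i j ^ W)
        = ∑ i : A, ∑ j : B, a i j ^ c₁ * a i j ^ c₂ := by
          rw [hWsum]; exact Finset.sum_congr rfl fun i _ =>
            Finset.sum_congr rfl fun j _ => expand i j
      _ ≤ ∑ i : A, U i * V i := Finset.sum_le_sum fun i _ => stepB i
      _ ≤ X1 ^ (c₁ / s₁) * M ^ (c₂ / q) := stepC
      _ ≤ X1 ^ (c₁ / s₁) * T ^ (c₂ / s₂) :=
          mul_le_mul_of_nonneg_left stepD (Real.rpow_nonneg hX1nn _)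
  have hSnn : 0 ≤ ∑ i : A, ∑ j : B, a i j ^ W :=
    Finset.sum_nonneg fun i _ => Finset.sum_nonneg fun j _ => Real.rpow_nonneg (ha i j) W
  have hNe : N ≠ 0 := ne_of_gt hN
  have eW1 : c₁ / s₁ * (1 / W) = (q ^ 2 * s₁ - q * s₁ * s₂) / N / s₁ := by
    rw [hc₁def, hWdef]; field_simp [h0s₁.ne']
  have eW2 : c₂ / s₂ * (1 / W) = (q ^ 2 * s₂ - q * s₂ * s₁) / N / s₂ := by
    rw [hc₂def, hWdef]; field_simp [h0s₂.ne']
  calc (∑ i : A, ∑ j : B, a i j ^ W) ^ (1 / W)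
      ≤ (X1 ^ (c₁ / s₁) * T ^ (c₂ / s₂)) ^ (1 / W) :=
        Real.rpow_le_rpow hSnn key (by positivity)
    _ = X1 ^ (c₁ / s₁ * (1 / W)) * T ^ (c₂ / s₂ * (1 / W)) := by
        rw [Real.mul_rpow (Real.rpow_nonneg hX1nn _) (Real.rpow_nonneg hTnn _),
          ← Real.rpow_mul hX1nn, ← Real.rpow_mul hTnn]
    _ = _ := by rw [eW1, eW2]
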